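/- Let (Ω, μ) be a probability space, let κ : Ω → ℝ^{d×d} be square-integrable with respect to μ, let r, β ∈ ℝ^d, and set q = ∫_Ω κ(y)κ(y)ᵀ μ(dy); assume q is positive definite. Then the infimum of (1/2)∫_Ω ‖v(y)‖² μ(dy) over all v ∈ L²(μ; ℝ^d) satisfying β = r + ∫_Ω κ(y)v(y) μ(dy) equals (1/2)(β − r)ᵀ q⁻¹ (β − r), and this infimum is attained by the function v̄(y) = κ(y)ᵀ q⁻¹ (β − r), which satisfies the constraint and has cost exactly (1/2)(β − r)ᵀ q⁻¹ (β − r). -/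

import Mathlib

open MeasureTheory Matrix

/-- **Explicit solution of the Regime 1 local rate function minimization.**
Let `(Ω, μ)` be a probability space, `κ : Ω → ℝ^{d×d}` square-integrable,
`r, β ∈ ℝ^d`, and `q = ∫ κ κᵀ dμ` positive definite.  Then the infimum of
`(1/2) ∫ ‖v‖² dμ` over `v ∈ L²(μ; ℝ^d)` satisfying `β = r + ∫ κ v dμ` equals
`(1/2)(β − r)ᵀ q⁻¹ (β − r)`, and it is attained by `v̄(y) = κ(y)ᵀ q⁻¹ (β − r)`,
which satisfies the constraint and has exactly this cost. -/
theorem regime1_local_rate_function_explicit_solution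
    {d : ℕ} {Ω : Type*} [MeasurableSpace Ω] (μ : Measure Ω) [IsProbabilityMeasure μ]
    (κ : Ω → Matrix (Fin d) (Fin d) ℝ)
    (hκ : ∀ i j, MemLp (fun y => κ y i j) 2 μ)
    (r β : Fin d → ℝ)
    (q : Matrix (Fin d) (Fin d) ℝ) (hq : q = Matrix.of fun i j => ∫ y, (κ y * (κ y)ᵀ) i j ∂μ)
    (hqpos : q.PosDef)
    (vbar : Ω → Fin d → ℝ)
    (hvbar : vbar = fun y => (κ y)ᵀ.mulVec (q⁻¹.mulVec (β - r))) :
    -- `v̄` is square integrable and satisfies the constraint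
    (∀ i, MemLp (fun y => vbar y i) 2 μ) ∧
    (β = fun i => r i + ∫ y, (κ y).mulVec (vbar y) i ∂μ) ∧
    -- the cost of `v̄` is exactly `(1/2)(β − r)ᵀ q⁻¹ (β − r)`
    ((1 / 2) * ∫ y, ∑ i, (vbar y i) ^ 2 ∂μ = (1 / 2) * ((β - r) ⬝ᵥ q⁻¹.mulVec (β - r))) ∧
    -- and this value is a lower bound over all admissible `v ∈ L²(μ; ℝ^d)`
    (∀ v : Ω → Fin d → ℝ, (∀ i, MemLp (fun y => v y i) 2 μ) →
      (β = fun i => r i + ∫ y, (κ y).mulVec (v y) i ∂μ) →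
      (1 / 2) * ((β - r) ⬝ᵥ q⁻¹.mulVec (β - r)) ≤ (1 / 2) * ∫ y, ∑ i, (v y i) ^ 2 ∂μ) := by
  set b : Fin d → ℝ := β - r with hb
  set w : Fin d → ℝ := q⁻¹.mulVec b with hw
  -- product of two L² functions is integrable
  have hmul : ∀ (f g : Ω → ℝ), MemLp f 2 μ → MemLp g 2 μ →
      Integrable (fun y => f y * g y) μ := by
    intro f g hf hg
    rw [← memLp_one_iff_integrable]
    exact hg.smul (q := 2) (r := 1) hf
  -- entries of κκᵀ are integrable
  have hκκ : ∀ i k, Integrable (fun y => (κ y * (κ y)ᵀ) i k) μ := by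
    intro i k
    simp only [Matrix.mul_apply, Matrix.transpose_apply]
    exact integrable_finset_sum _ fun j _ => hmul _ _ (hκ i j) (hκ k j)
  have hqe : ∀ i k, q i k = ∫ y, (κ y * (κ y)ᵀ) i k ∂μ := by
    intro i k; rw [hq]; rfl
  -- membership of vbar in L²
  have hvmem : ∀ i, MemLp (fun y => vbar y i) 2 μ := by
    intro i
    rw [hvbar]
    simp only [Matrix.mulVec, dotProduct, Matrix.transpose_apply]
    exact memLp_finset_sum _ fun k _ => by
      simpa [mul_comm] using (hκ k i).const_mul (w k)
  -- constraint for vbar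
  have hconstr : ∀ i, ∫ y, (κ y).mulVec (vbar y) i ∂μ = b i := by
    intro i
    have hpt : ∀ y, (κ y).mulVec (vbar y) i = ((κ y * (κ y)ᵀ).mulVec w) i := by
      intro y; rw [hvbar]; rw [Matrix.mulVec_mulVec]
    calc ∫ y, (κ y).mulVec (vbar y) i ∂μ
        = ∫ y, ((κ y * (κ y)ᵀ).mulVec w) i ∂μ := by simp_rw [hpt]
      _ = ∑ k, (∫ y, (κ y * (κ y)ᵀ) i k ∂μ) * w k := by
          simp only [Matrix.mulVec, dotProduct]
          rw [integral_finset_sum _ fun k _ => (hκκ i k).mul_const (w k)]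
          exact Finset.sum_congr rfl fun k _ => integral_mul_const _ _
      _ = q.mulVec w i := by
          simp only [Matrix.mulVec, dotProduct]
          exact Finset.sum_congr rfl fun k _ => by rw [hqe]
      _ = b i := by
          rw [hw, Matrix.mulVec_mulVec,
            Matrix.mul_nonsing_inv _ hqpos.det_pos.ne'.isUnit, Matrix.one_mulVec]
  -- the key pairing identity
  have pairing : ∀ v : Ω → Fin d → ℝ, (∀ i, MemLp (fun y => v y i) 2 μ) →
      (∀ k, ∫ y, (κ y).mulVec (v y) k ∂μ = b k) →
      ∫ y, ∑ i, vbar y i * v y i ∂μ = b ⬝ᵥ q⁻¹.mulVec b := by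
    intro v hv hcv
    have hκv : ∀ k, Integrable (fun y => (κ y).mulVec (v y) k) μ := by
      intro k
      simp only [Matrix.mulVec, dotProduct]
      exact integrable_finset_sum _ fun j _ => hmul _ _ (hκ k j) (hv j)
    have hpt : ∀ y, ∑ i, vbar y i * v y i = ∑ k, w k * (κ y).mulVec (v y) k := by
      intro y
      have h1 : ∑ i, vbar y i * v y i = ((κ y)ᵀ *ᵥ w) ⬝ᵥ v y := by
        rw [hvbar]; rfl
      have h2 : ((κ y)ᵀ *ᵥ w) ⬝ᵥ v y = w ⬝ᵥ ((κ y) *ᵥ v y) := by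
        rw [Matrix.mulVec_transpose, ← dotProduct_mulVec]
      rw [h1, h2]; rfl
    calc ∫ y, ∑ i, vbar y i * v y i ∂μ
        = ∫ y, ∑ k, w k * (κ y).mulVec (v y) k ∂μ := by simp_rw [hpt]
      _ = ∑ k, w k * ∫ y, (κ y).mulVec (v y) k ∂μ := by
          rw [integral_finset_sum _ fun k _ => (hκv k).const_mul (w k)]
          exact Finset.sum_congr rfl fun k _ => integral_const_mul _ _
      _ = ∑ k, w k * b k := by simp_rw [hcv]
      _ = b ⬝ᵥ q⁻¹.mulVec b := by
          rw [hw, ← dotProduct, dotProduct_comm]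
  -- cost of vbar
  have hcost : ∫ y, ∑ i, (vbar y i) ^ 2 ∂μ = b ⬝ᵥ q⁻¹.mulVec b := by
    have := pairing vbar hvmem hconstr
    simpa [sq] using this
  refine ⟨hvmem, ?_, by rw [hcost], ?_⟩
  · funext i
    rw [hconstr i]
    simp [hb]
  · intro v hv hcon
    have hcv : ∀ k, ∫ y, (κ y).mulVec (v y) k ∂μ = b k := by
      intro k
      have := congrFun hcon k
      simp only [hb, Pi.sub_apply]
      linarith
    have hpair := pairing v hv hcv
    -- integrability of the pieces
    have hintv : Integrable (fun y => ∑ i, (v y i) ^ 2) μ :=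
      integrable_finset_sum _ fun i _ => (hv i).integrable_sq
    have hintvb : Integrable (fun y => ∑ i, (vbar y i) ^ 2) μ :=
      integrable_finset_sum _ fun i _ => (hvmem i).integrable_sq
    have hintx : Integrable (fun y => ∑ i, vbar y i * v y i) μ :=
      integrable_finset_sum _ fun i _ => hmul _ _ (hvmem i) (hv i)
    have hkey : ∫ y, ∑ i, (v y i - vbar y i) ^ 2 ∂μ
        = (∫ y, ∑ i, (v y i) ^ 2 ∂μ) - b ⬝ᵥ q⁻¹.mulVec b := by
      have hpt : ∀ y, ∑ i, (v y i - vbar y i) ^ 2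
          = (∑ i, (v y i) ^ 2) - (2 : ℝ) * (∑ i, vbar y i * v y i)
            + ∑ i, (vbar y i) ^ 2 := by
        intro y
        rw [Finset.mul_sum, ← Finset.sum_sub_distrib, ← Finset.sum_add_distrib]
        exact Finset.sum_congr rfl fun i _ => by ring
      simp_rw [hpt]
      have h2 : Integrable (fun y => (2 : ℝ) * ∑ i, vbar y i * v y i) μ :=
        hintx.const_mul 2
      have h1 : Integrable
          (fun y => (∑ i, (v y i) ^ 2) - (2 : ℝ) * ∑ i, vbar y i * v y i) μ :=
        hintv.sub h2
      rw [integral_add h1 hintvb, integral_sub hintv h2, integral_const_mul, hpair, hcost]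
      ring
    have hnn : 0 ≤ ∫ y, ∑ i, (v y i - vbar y i) ^ 2 ∂μ :=
      integral_nonneg fun y => Finset.sum_nonneg fun i _ => sq_nonneg _
    rw [hkey] at hnn
    nlinarith [hnn]
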